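/- For any injective sequence r(1),...,r(B) of distinct indices from {1,...,N} with B ≥ 2, positive λ's, Λ_{-r} = Σ_{i=1}^B λ_{r(i)}, the following identity holds: 1 = Σ_{j=2}^{B-1} [∏_{k=2}^{j-1} (Λ_{-r} - Σ_{i=1}^{k} λ_{r(i)})/(Λ_{-r} - Σ_{i=2}^{k} λ_{r(i)})] · λ_{r(1)}/(Λ_{-r} - Σ_{i=2}^{j} λ_{r(i)}) + ∏_{k=2}^{B-1} (Λ_{-r} - Σ_{i=1}^{k} λ_{r(i)})/(Λ_{-r} - Σ_{i=2}^{k} λ_{r(i)}), with the conventions that empty products equal 1 and empty sums equal 0. -/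

import Mathlib

open Finset

lemma mru_tele (c : ℝ) (b : ℕ → ℝ) :
    ∀ m : ℕ, 1 ≤ m → (∀ k ∈ Finset.Icc 2 m, b k ≠ 0) →
    (1 : ℝ) =
      (∑ j ∈ Finset.Icc 2 m,
        (∏ k ∈ Finset.Icc 2 (j - 1), (b k - c) / b k) * (c / b j))
      + ∏ k ∈ Finset.Icc 2 m, (b k - c) / b k := by
  intro m
  induction m with
  | zero => intro h; omega
  | succ n ih =>
    intro _ hb
    rcases Nat.lt_or_ge n 1 with hn | hn
    · interval_cases n
      simp
    · have h2 : 2 ≤ n + 1 := by omega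
      have hsum : ∑ j ∈ Finset.Icc 2 (n + 1),
          (∏ k ∈ Finset.Icc 2 (j - 1), (b k - c) / b k) * (c / b j)
          = (∑ j ∈ Finset.Icc 2 n,
              (∏ k ∈ Finset.Icc 2 (j - 1), (b k - c) / b k) * (c / b j))
            + (∏ k ∈ Finset.Icc 2 n, (b k - c) / b k) * (c / b (n + 1)) := by
        rw [Finset.sum_Icc_succ_top h2]
        simp
      have hprod : ∏ k ∈ Finset.Icc 2 (n + 1), (b k - c) / b k
          = (∏ k ∈ Finset.Icc 2 n, (b k - c) / b k) * ((b (n+1) - c) / b (n + 1)) := by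
        rw [Finset.prod_Icc_succ_top h2]
      have hb' : ∀ k ∈ Finset.Icc 2 n, b k ≠ 0 := by
        intro k hk
        exact hb k (Finset.mem_Icc.mpr ⟨(Finset.mem_Icc.mp hk).1, by
          have := (Finset.mem_Icc.mp hk).2; omega⟩)
      have hbn : b (n + 1) ≠ 0 := hb (n + 1) (Finset.mem_Icc.mpr ⟨h2, le_refl _⟩)
      have key := ih hn hb'
      have h1 : c / b (n + 1) + (b (n + 1) - c) / b (n + 1) = 1 := by
        field_simp
        ring
      rw [hsum, hprod, add_assoc, ← mul_add, h1, mul_one]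
      exact key

theorem mru_balance_identity (N B : ℕ) (hB : 2 ≤ B) (hBN : B ≤ N)
    (lam : Fin N → ℝ) (hlam : ∀ n, 0 < lam n)
    (r : ℕ → Fin N) (hr : Set.InjOn r (Set.Icc 1 B))
    (Λr : ℝ) (hΛr : Λr = ∑ i ∈ Finset.Icc 1 B, lam (r i)) :
    (1 : ℝ) =
      (∑ j ∈ Finset.Icc 2 (B - 1),
        (∏ k ∈ Finset.Icc 2 (j - 1),
          (Λr - ∑ i ∈ Finset.Icc 1 k, lam (r i)) /
            (Λr - ∑ i ∈ Finset.Icc 2 k, lam (r i))) *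
          (lam (r 1) / (Λr - ∑ i ∈ Finset.Icc 2 j, lam (r i))))
      + ∏ k ∈ Finset.Icc 2 (B - 1),
          (Λr - ∑ i ∈ Finset.Icc 1 k, lam (r i)) /
            (Λr - ∑ i ∈ Finset.Icc 2 k, lam (r i)) := by
  set b : ℕ → ℝ := fun k => Λr - ∑ i ∈ Finset.Icc 2 k, lam (r i) with hbdef
  set c : ℝ := lam (r 1) with hcdef
  have hsplit : ∀ k : ℕ, 1 ≤ k →
      Λr - ∑ i ∈ Finset.Icc 1 k, lam (r i) = b k - c := by
    intro k hk
    have : Finset.Icc 1 k = insert 1 (Finset.Icc 2 k) := by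
      ext x
      simp only [Finset.mem_insert, Finset.mem_Icc]
      omega
    rw [this, Finset.sum_insert (by simp)]
    simp [hbdef, hcdef]
    ring
  have hbpos : ∀ k ∈ Finset.Icc 2 (B - 1), 0 < b k := by
    intro k hk
    obtain ⟨hk2, hkB⟩ := Finset.mem_Icc.mp hk
    have hsub : Finset.Icc 2 k ⊆ Finset.Icc 1 B := by
      intro x hx
      simp only [Finset.mem_Icc] at *
      omega
    have := Finset.sum_sdiff hsub (f := fun i => lam (r i))
    have hbk : b k = ∑ i ∈ Finset.Icc 1 B \ Finset.Icc 2 k, lam (r i) := by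
      simp only [hbdef, hΛr]
      linarith
    rw [hbk]
    apply Finset.sum_pos
    · intro i _; exact hlam _
    · refine ⟨1, ?_⟩
      simp only [Finset.mem_sdiff, Finset.mem_Icc]
      omega
  have hbne : ∀ k ∈ Finset.Icc 2 (B - 1), b k ≠ 0 := fun k hk => (hbpos k hk).ne'
  have key := mru_tele c b (B - 1) (by omega) hbne
  calc (1 : ℝ)
      = (∑ j ∈ Finset.Icc 2 (B - 1),
          (∏ k ∈ Finset.Icc 2 (j - 1), (b k - c) / b k) * (c / b j))
        + ∏ k ∈ Finset.Icc 2 (B - 1), (b k - c) / b k := key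
    _ = _ := by
        congr 1
        · refine Finset.sum_congr rfl fun j hj => ?_
          obtain ⟨hj2, hjB⟩ := Finset.mem_Icc.mp hj
          congr 1
          refine Finset.prod_congr rfl fun k hk => ?_
          obtain ⟨hk2, hkj⟩ := Finset.mem_Icc.mp hk
          rw [hsplit k (by omega)]
        · refine Finset.prod_congr rfl fun k hk => ?_
          obtain ⟨hk2, hkB⟩ := Finset.mem_Icc.mp hk
          rw [hsplit k (by omega)]
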